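/- Let A and B be finite strings (lists over a type α with decidable equality) of lengths m and n respectively, with 0 < m ≤ n. Then the maximum over all k with 0 ≤ k < m of lcsLen(cut(A,k), B) equals the maximum over all i, j with 0 ≤ i < m and 0 ≤ j < n of lcsLen(cut(A,i), cut(B,j)). In other words, a cyclic longest common subsequence of A and B is attained with B left uncut. -/

import Mathlib

/-- `lcsLen s t` is the maximum length of a list that is a sublist
(subsequence) of both `s` and `t`. -/
def lcsLen {α : Type*} [DecidableEq α] (s t : List α) : ℕ :=
  ((s.sublists.filter (fun l => decide (l.Sublist t))).map List.length).foldr max 0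

private lemma mem_le_foldr_max (L : List ℕ) {a : ℕ} (h : a ∈ L) : a ≤ L.foldr max 0 := by
  induction L with
  | nil => simp at h
  | cons b L ih =>
    rcases List.mem_cons.1 h with rfl | h
    · exact le_max_left _ _
    · exact le_trans (ih h) (le_max_right _ _)

private lemma foldr_max_mem (L : List ℕ) : L.foldr max 0 = 0 ∨ L.foldr max 0 ∈ L := by
  induction L with
  | nil => simp
  | cons b L ih =>
    rcases le_total b (L.foldr max 0) with h | h
    · rcases ih with h0 | hmem
      · right
        have hb : b = 0 := le_antisymm (h0 ▸ h) (Nat.zero_le _)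
        simp [List.foldr_cons, max_eq_right h, h0, hb]
      · right
        rw [List.foldr_cons, max_eq_right h]
        exact List.mem_cons_of_mem _ hmem
    · right
      rw [List.foldr_cons, max_eq_left h]
      exact List.mem_cons_self

lemma le_lcsLen {α : Type*} [DecidableEq α] {l s t : List α}
    (hs : l.Sublist s) (ht : l.Sublist t) : l.length ≤ lcsLen s t := by
  apply mem_le_foldr_max
  refine List.mem_map.2 ⟨l, ?_, rfl⟩
  rw [List.mem_filter]
  exact ⟨List.mem_sublists.2 hs, by simpa using ht⟩

lemma exists_lcs {α : Type*} [DecidableEq α] (s t : List α) :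
    ∃ l : List α, l.Sublist s ∧ l.Sublist t ∧ l.length = lcsLen s t := by
  rcases foldr_max_mem ((s.sublists.filter (fun l : List α => decide (l.Sublist t))).map List.length)
    with h0 | hm
  · exact ⟨[], List.nil_sublist _, List.nil_sublist _, by simp [lcsLen, h0]⟩
  · obtain ⟨l, hl, hlen⟩ := List.mem_map.1 hm
    rw [List.mem_filter] at hl
    exact ⟨l, List.mem_sublists.1 hl.1, by simpa using hl.2, hlen⟩

/-- A cyclic LCS of `A` and `B` (with `0 < |A| ≤ |B|`) is attained with `B`
left uncut: the max over cuts of `A` alone equals the max over all cut pairs. -/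
theorem clcs_attained_with_B_uncut {α : Type*} [DecidableEq α]
    (A B : List α) (hm : 0 < A.length) (hmn : A.length ≤ B.length) :
    (Finset.range A.length).sup (fun k => lcsLen (A.rotate k) B) =
      (Finset.range A.length).sup (fun i =>
        (Finset.range B.length).sup (fun j => lcsLen (A.rotate i) (B.rotate j))) := by
  have hn : 0 < B.length := lt_of_lt_of_le hm hmn
  apply le_antisymm
  · apply Finset.sup_le
    intro k hk
    refine le_trans ?_ (Finset.le_sup hk)
    have h0 : (0 : ℕ) ∈ Finset.range B.length := Finset.mem_range.2 hn
    refine le_trans ?_ (Finset.le_sup h0)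
    simp
  · apply Finset.sup_le
    intro i _
    apply Finset.sup_le
    intro j hj
    obtain ⟨l, hlA, hlB, hlen⟩ := exists_lcs (A.rotate i) (B.rotate j)
    -- decompose l along the rotation of B
    have hjB : B.rotate j = B.drop j ++ B.take j :=
      List.rotate_eq_drop_append_take (le_of_lt (Finset.mem_range.1 hj))
    rw [hjB] at hlB
    obtain ⟨l₁, l₂, rfl, h₁, h₂⟩ := List.sublist_append_iff.1 hlB
    -- the swapped list is a sublist of B
    have hB : (l₂ ++ l₁).Sublist B := by
      have := List.Sublist.append h₂ h₁
      rwa [List.take_append_drop] at this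
    -- decompose A.rotate i along l₁ ++ l₂
    obtain ⟨u, v, huv, hu, hv⟩ := List.append_sublist_iff.1 hlA
    have hA : (l₂ ++ l₁).Sublist (A.rotate (i + u.length)) := by
      rw [← List.rotate_rotate, huv]
      have : (u ++ v).rotate u.length = v ++ u := by
        rw [List.rotate_eq_drop_append_take (by simp), List.drop_left, List.take_left]
      rw [this]
      exact List.Sublist.append hv hu
    set k := (i + u.length) % A.length with hkdef
    have hkr : A.rotate k = A.rotate (i + u.length) := List.rotate_mod _ _
    have hkmem : k ∈ Finset.range A.length := Finset.mem_range.2 (Nat.mod_lt _ hm)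
    calc lcsLen (A.rotate i) (B.rotate j) = (l₂ ++ l₁).length := by
            rw [← hlen]; simp [Nat.add_comm]
      _ ≤ lcsLen (A.rotate k) B := le_lcsLen (by rw [hkr]; exact hA) hB
      _ ≤ _ := Finset.le_sup (f := fun k => lcsLen (A.rotate k) B) hkmem
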